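/- Let G be a countable discrete group with a measure-preserving action on a standard Borel probability space (X, μ), and assume the conjugation–Koopman representation has spectral gap, i.e., there exist a finite set S₀ ⊆ G and κ > 0 such that every ξ ∈ L²(G × X, ν) satisfying ∫_X ξ(h, x) dμ(x) = 0 for every h ∈ G obeys max_{g∈S₀} ‖π(g)ξ − ξ‖₂ ≥ κ‖ξ‖₂. Then for every ε > 0 there exist a finite subset S ⊆ G and δ > 0 such that whenever ξ : G × X → [0, ∞) is measurable with ‖ξ‖₁ = 1 and max_{g∈S} ‖ξ^g − ξ‖₁ < δ, one has ‖ξ − Pξ‖₁ < ε, where (Pξ)(h, x) := ∫_X ξ(h, t) dμ(t). -/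

import Mathlib

open Filter Topology MeasureTheory
open scoped ENNReal

section Helpers

instance auxSFiniteCount {G : Type*} [Countable G] [MeasurableSpace G] :
    SFinite (Measure.count : Measure G) := by
  unfold Measure.count; infer_instance

lemma aux_conj22 : (2:ℝ).HolderConjugate 2 := by rw [Real.holderConjugate_iff]; norm_num

lemma aux_lintegral_nu {G X : Type*} [MeasurableSpace G] [MeasurableSingletonClass G]
    [MeasurableSpace X] (μ : Measure X) [SFinite μ]
    (f : G × X → ℝ≥0∞) (hf : Measurable f) :
    ∫⁻ p, f p ∂((Measure.count : Measure G).prod μ) = ∑' h : G, ∫⁻ x, f (h, x) ∂μ := by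
  rw [MeasureTheory.lintegral_prod _ hf.aemeasurable, MeasureTheory.lintegral_count]

lemma aux_sq_lintegral_le {X : Type*} [MeasurableSpace X] (μ : Measure X)
    [IsProbabilityMeasure μ] (f : X → ℝ≥0∞) (hf : AEMeasurable f μ) :
    (∫⁻ x, f x ∂μ) ^ (2:ℝ) ≤ ∫⁻ x, (f x) ^ (2:ℝ) ∂μ := by
  have h := ENNReal.lintegral_mul_le_Lp_mul_Lq μ aux_conj22 hf
    (aemeasurable_const (b := (1:ℝ≥0∞)))
  simp only [Pi.mul_apply, mul_one, ENNReal.one_rpow, lintegral_one, measure_univ,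
    one_mul] at h
  calc (∫⁻ x, f x ∂μ) ^ (2:ℝ)
      ≤ ((∫⁻ x, f x ^ (2:ℝ) ∂μ) ^ (1/(2:ℝ))) ^ (2:ℝ) :=
        ENNReal.rpow_le_rpow h (by norm_num)
    _ = ∫⁻ x, f x ^ (2:ℝ) ∂μ := by
        rw [← ENNReal.rpow_mul]; norm_num

lemma aux_sqrt_sq_le_abs {a b : ℝ} (ha : 0 ≤ a) (hb : 0 ≤ b) :
    (Real.sqrt a - Real.sqrt b) ^ 2 ≤ |a - b| := by
  have h1 := Real.sq_sqrt ha
  have h2 := Real.sq_sqrt hb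
  have h3 := Real.sqrt_nonneg a
  have h4 := Real.sqrt_nonneg b
  rcases le_total a b with h | h
  · have h5 := Real.sqrt_le_sqrt h
    rw [abs_of_nonpos (by linarith)]
    nlinarith [mul_le_mul_of_nonneg_left h5 h3]
  · have h5 := Real.sqrt_le_sqrt h
    rw [abs_of_nonneg (by linarith)]
    nlinarith [mul_le_mul_of_nonneg_left h5 h4]

lemma aux_sqrt_le_one_add {t : ℝ} (ht : 0 ≤ t) : Real.sqrt t ≤ 1 + t := by
  nlinarith [Real.sq_sqrt ht, Real.sqrt_nonneg t, sq_nonneg (Real.sqrt t - 1)]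

lemma aux_elp2 {α : Type*} [MeasurableSpace α] (m : Measure α) (f : α → ℝ) :
    eLpNorm f 2 m = (∫⁻ x, (‖f x‖₊ : ℝ≥0∞) ^ (2:ℝ) ∂m) ^ (1/2:ℝ) := by
  rw [eLpNorm_eq_lintegral_rpow_enorm_toReal two_ne_zero ENNReal.ofNat_ne_top]
  norm_num
  rfl

lemma aux_elp1 {α : Type*} [MeasurableSpace α] (m : Measure α) (f : α → ℝ) :
    eLpNorm f 1 m = ∫⁻ x, (‖f x‖₊ : ℝ≥0∞) ∂m :=
  eLpNorm_one_eq_lintegral_enorm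

lemma aux_nnnorm_eq_ofReal_abs (r : ℝ) : (‖r‖₊ : ℝ≥0∞) = ENNReal.ofReal |r| :=
  Real.enorm_eq_ofReal_abs r

lemma aux_enorm_sqrt_sq {t : ℝ} (ht : 0 ≤ t) :
    (‖Real.sqrt t‖₊ : ℝ≥0∞) ^ (2:ℝ) = (‖t‖₊ : ℝ≥0∞) := by
  rw [aux_nnnorm_eq_ofReal_abs, aux_nnnorm_eq_ofReal_abs,
    abs_of_nonneg (Real.sqrt_nonneg t), abs_of_nonneg ht,
    ENNReal.ofReal_rpow_of_nonneg (Real.sqrt_nonneg t) (by norm_num)]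
  congr 1
  rw [show ((2:ℝ)) = ((2:ℕ):ℝ) by norm_num, Real.rpow_natCast, Real.sq_sqrt ht]

lemma aux_ofReal_abs_integral_le {X : Type*} [MeasurableSpace X] (μ : Measure X) (f : X → ℝ)
    (hf : Integrable f μ) :
    ENNReal.ofReal |∫ x, f x ∂μ| ≤ ∫⁻ x, (‖f x‖₊ : ℝ≥0∞) ∂μ := by
  refine le_trans ?_ (ofReal_integral_norm_eq_lintegral_enorm hf).le
  refine ENNReal.ofReal_le_ofReal ?_
  rw [← Real.norm_eq_abs]
  exact norm_integral_le_integral_norm f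

end Helpers

/-- The natural measure on `G × X`: the product of the counting measure on the countable
discrete group `G` with the probability measure `μ` on `X`. -/
noncomputable def nuGX (G : Type*) {X : Type*} [MeasurableSpace G] [MeasurableSpace X]
    (μ : Measure X) : Measure (G × X) :=
  (Measure.count : Measure G).prod μ

/-- Let `G` be a countable group with a measure-preserving action on a standard Borel
probability space `(X, μ)` whose conjugation–Koopman representation
`(π(g)ξ)(h, x) = ξ(g⁻¹ h g, g⁻¹ • x)` on `L²(G × X, ν)` has spectral gap (with respect to
the mean-zero-on-every-fiber subspace).  Then for every `ε > 0` there are a finite `S ⊆ G`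
and `δ > 0` such that every nonnegative measurable `ξ` on `G × X` with `‖ξ‖₁ = 1` and
`‖ξ^g - ξ‖₁ < δ` for all `g ∈ S` (where `ξ^g (h, x) = ξ (g h g⁻¹, g • x)`) satisfies
`‖ξ - Pξ‖₁ < ε`, where `(Pξ)(h, x) = ∫ ξ(h, t) dμ(t)`. -/
theorem l1_close_to_fiber_average_of_spectral_gap
    {G : Type*} [Group G] [Countable G] [MeasurableSpace G] [MeasurableSingletonClass G]
    {X : Type*} [MeasurableSpace X] [StandardBorelSpace X]
    (μ : Measure X) [IsProbabilityMeasure μ] [MulAction G X]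
    (hmp : ∀ g : G, MeasurePreserving (fun x : X => g • x) μ μ)
    (S₀ : Finset G) (κ : ℝ) (hκ : 0 < κ)
    (hgap : ∀ ξ : G × X → ℝ, MemLp ξ 2 (nuGX G μ) →
      (∀ h : G, ∫ x, ξ (h, x) ∂μ = 0) →
      ∃ g ∈ S₀, ENNReal.ofReal κ * eLpNorm ξ 2 (nuGX G μ) ≤
        eLpNorm (fun p : G × X => ξ (g⁻¹ * p.1 * g, g⁻¹ • p.2) - ξ p) 2 (nuGX G μ))
    (ε : ℝ) (hε : 0 < ε) :
    ∃ (S : Finset G) (δ : ℝ), 0 < δ ∧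
      ∀ ξ : G × X → ℝ, Measurable ξ → (∀ p, 0 ≤ ξ p) →
        eLpNorm ξ 1 (nuGX G μ) = 1 →
        (∀ g ∈ S,
          eLpNorm (fun p : G × X => ξ (g * p.1 * g⁻¹, g • p.2) - ξ p) 1 (nuGX G μ) <
            ENNReal.ofReal δ) →
        eLpNorm (fun p : G × X => ξ p - ∫ t, ξ (p.1, t) ∂μ) 1 (nuGX G μ) <
          ENNReal.ofReal ε := by
  classical
  have hνdef : nuGX G μ = (Measure.count : Measure G).prod μ := rfl
  refine ⟨S₀ ∪ S₀.image (·⁻¹), (κ * ε / 16)^2, by positivity, ?_⟩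
  intro ξ hmeas hpos hnorm hS
  -- integrals over the slice measure preserved under the action
  have hint_comp : ∀ (g : G) (f : X → ℝ), Integrable f μ →
      Integrable (fun x => f (g • x)) μ := by
    intro g f hf
    exact (integrable_map_measure (by rw [(hmp g).map_eq]; exact hf.1)
      (hmp g).measurable.aemeasurable).mp (by rw [(hmp g).map_eq]; exact hf)
  have hint_smul : ∀ (g : G) (f : X → ℝ), AEStronglyMeasurable f μ →
      ∫ x, f (g • x) ∂μ = ∫ x, f x ∂μ := by
    intro g f hf
    conv_rhs => rw [← (hmp g).map_eq]
    rw [integral_map (hmp g).measurable.aemeasurable (by rw [(hmp g).map_eq]; exact hf)]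
  -- the square root
  set η : G × X → ℝ := fun p => Real.sqrt (ξ p) with hη
  have hη_meas : Measurable η := hmeas.sqrt
  have hη_slice_meas : ∀ h : G, Measurable (fun x => η (h, x)) :=
    fun h => hη_meas.comp measurable_prodMk_left
  have hξ_slice_meas : ∀ h : G, Measurable (fun x => ξ (h, x)) :=
    fun h => hmeas.comp measurable_prodMk_left
  have hη_sq : ∀ p, (‖η p‖₊ : ℝ≥0∞) ^ (2:ℝ) = (‖ξ p‖₊ : ℝ≥0∞) :=
    fun p => aux_enorm_sqrt_sq (hpos p)
  have hξ1 : ∫⁻ p, (‖ξ p‖₊ : ℝ≥0∞) ∂((Measure.count : Measure G).prod μ) = 1 := by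
    rw [← aux_elp1, ← hνdef, hnorm]
  have hη2 : ∫⁻ p, (‖η p‖₊ : ℝ≥0∞) ^ (2:ℝ) ∂((Measure.count : Measure G).prod μ) = 1 := by
    simp_rw [hη_sq]; exact hξ1
  have hξ1' : ∑' h : G, ∫⁻ x, (‖ξ (h, x)‖₊ : ℝ≥0∞) ∂μ = 1 := by
    rw [← aux_lintegral_nu μ _ hmeas.nnnorm.coe_nnreal_ennreal]; exact hξ1
  have hfiber_fin : ∀ h : G, ∫⁻ x, (‖ξ (h, x)‖₊ : ℝ≥0∞) ∂μ ≤ 1 :=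
    fun h => le_of_le_of_eq (ENNReal.le_tsum h) hξ1'
  have hξ_int : ∀ h : G, Integrable (fun x => ξ (h, x)) μ := by
    intro h
    refine ⟨(hξ_slice_meas h).aestronglyMeasurable, ?_⟩
    rw [HasFiniteIntegral]
    exact lt_of_le_of_lt (hfiber_fin h) ENNReal.one_lt_top
  have hη_int : ∀ h : G, Integrable (fun x => η (h, x)) μ := by
    intro h
    refine Integrable.mono ((integrable_const (1:ℝ)).add (hξ_int h))
      (hη_slice_meas h).aestronglyMeasurable (Eventually.of_forall fun x => ?_)
    have h0 := hpos (h, x)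
    have := aux_sqrt_le_one_add h0
    simp only [Real.norm_eq_abs, hη]
    rw [abs_of_nonneg (Real.sqrt_nonneg _)]
    exact le_trans this (le_abs_self _)
  -- the fiber averages of η
  set a : G → ℝ := fun h => ∫ x, η (h, x) ∂μ with ha
  have ha_nn : ∀ h, 0 ≤ a h := fun h => integral_nonneg fun x => Real.sqrt_nonneg _
  have ha_ofReal : ∀ h, (‖a h‖₊ : ℝ≥0∞) = ∫⁻ x, (‖η (h, x)‖₊ : ℝ≥0∞) ∂μ := by
    intro h
    rw [aux_nnnorm_eq_ofReal_abs, abs_of_nonneg (ha_nn h),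
      ofReal_integral_eq_lintegral_ofReal (hη_int h)
        (Eventually.of_forall fun x => Real.sqrt_nonneg _)]
    congr 1; ext x
    rw [aux_nnnorm_eq_ofReal_abs, abs_of_nonneg (Real.sqrt_nonneg _)]
  have ha_sq : ∀ h, (‖a h‖₊ : ℝ≥0∞) ^ (2:ℝ) ≤ ∫⁻ x, (‖η (h, x)‖₊ : ℝ≥0∞) ^ (2:ℝ) ∂μ := by
    intro h
    rw [ha_ofReal h]
    exact aux_sq_lintegral_le μ _ (hη_slice_meas h).nnnorm.coe_nnreal_ennreal.aemeasurable
  have hafst_meas : Measurable (fun p : G × X => a p.1) :=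
    (measurable_of_countable a).comp measurable_fst
  have ha_sum : ∫⁻ p, (‖a p.1‖₊ : ℝ≥0∞) ^ (2:ℝ) ∂((Measure.count : Measure G).prod μ) ≤ 1 := by
    rw [aux_lintegral_nu μ _ (hafst_meas.nnnorm.coe_nnreal_ennreal.pow_const _)]
    calc ∑' h : G, ∫⁻ _x, (‖a h‖₊ : ℝ≥0∞) ^ (2:ℝ) ∂μ
        = ∑' h : G, (‖a h‖₊ : ℝ≥0∞) ^ (2:ℝ) := by
          congr 1; ext h; rw [lintegral_const, measure_univ, mul_one]
      _ ≤ ∑' h : G, ∫⁻ x, (‖η (h, x)‖₊ : ℝ≥0∞) ^ (2:ℝ) ∂μ := ENNReal.tsum_le_tsum ha_sq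
      _ = 1 := by
          rw [← aux_lintegral_nu μ _ (hη_meas.nnnorm.coe_nnreal_ennreal.pow_const _)]
          exact hη2
  have hη_L2 : eLpNorm η 2 (nuGX G μ) ≤ 1 := by
    rw [aux_elp2, hνdef, hη2, ENNReal.one_rpow]
  have ha_L2 : eLpNorm (fun p : G × X => a p.1) 2 (nuGX G μ) ≤ 1 := by
    rw [aux_elp2, hνdef]
    calc (∫⁻ p, (‖a p.1‖₊ : ℝ≥0∞) ^ (2:ℝ) ∂((Measure.count : Measure G).prod μ)) ^ (1/2:ℝ)
        ≤ (1:ℝ≥0∞) ^ (1/2:ℝ) := ENNReal.rpow_le_rpow ha_sum (by norm_num)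
      _ = 1 := ENNReal.one_rpow _
  -- the mean-zero part
  set η₀ : G × X → ℝ := fun p => η p - a p.1 with hη₀
  have hη₀_meas : Measurable η₀ := hη_meas.sub hafst_meas
  have hη₀_mem : MemLp η₀ 2 (nuGX G μ) := by
    refine ⟨hη₀_meas.aestronglyMeasurable, ?_⟩
    calc eLpNorm η₀ 2 (nuGX G μ)
        ≤ eLpNorm η 2 (nuGX G μ) + eLpNorm (fun p : G × X => a p.1) 2 (nuGX G μ) :=
          eLpNorm_sub_le hη_meas.aestronglyMeasurable hafst_meas.aestronglyMeasurable one_le_two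
      _ ≤ 1 + 1 := add_le_add hη_L2 ha_L2
      _ < ⊤ := by norm_num
  have hη₀_mean : ∀ h : G, ∫ x, η₀ (h, x) ∂μ = 0 := by
    intro h
    simp only [hη₀]
    rw [integral_sub (hη_int h) (integrable_const _), integral_const, probReal_univ]
    simp [ha]
  obtain ⟨g, hgS₀, hineq⟩ := hgap η₀ hη₀_mem hη₀_mean
  -- the shifted differences
  set Dη : G × X → ℝ := fun p => η (g⁻¹ * p.1 * g, g⁻¹ • p.2) - η p with hDη
  set c : G → ℝ := fun h => a (g⁻¹ * h * g) - a h with hc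
  have hTg : Measurable (fun p : G × X => ((g⁻¹ * p.1 * g : G), g⁻¹ • p.2)) := by
    apply Measurable.prodMk
    · exact (measurable_of_countable (fun h : G => g⁻¹ * h * g)).comp measurable_fst
    · exact (hmp g⁻¹).measurable.comp measurable_snd
  have hDη_meas : Measurable Dη := (hη_meas.comp hTg).sub hη_meas
  have hcfst_meas : Measurable (fun p : G × X => c p.1) :=
    (measurable_of_countable c).comp measurable_fst
  have hshift_int : ∀ h : G, Integrable (fun x => η (g⁻¹ * h * g, g⁻¹ • x)) μ :=
    fun h => hint_comp g⁻¹ (fun x => η (g⁻¹ * h * g, x)) (hη_int _)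
  have hDη_slice_int : ∀ h : G, Integrable (fun x => Dη (h, x)) μ :=
    fun h => (hshift_int h).sub (hη_int h)
  have hc_eq : ∀ h : G, c h = ∫ x, Dη (h, x) ∂μ := by
    intro h
    simp only [hDη]
    rw [integral_sub (hshift_int h) (hη_int h)]
    simp only [hc]
    congr 1
    exact (hint_smul g⁻¹ (fun x => η (g⁻¹ * h * g, x))
      (hη_slice_meas _).aestronglyMeasurable).symm
  have hc_sq : ∀ h : G, (‖c h‖₊ : ℝ≥0∞) ^ (2:ℝ) ≤
      ∫⁻ x, (‖Dη (h, x)‖₊ : ℝ≥0∞) ^ (2:ℝ) ∂μ := by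
    intro h
    have h1 : (‖c h‖₊ : ℝ≥0∞) ≤ ∫⁻ x, (‖Dη (h, x)‖₊ : ℝ≥0∞) ∂μ := by
      rw [aux_nnnorm_eq_ofReal_abs, hc_eq h]
      exact aux_ofReal_abs_integral_le μ _ (hDη_slice_int h)
    calc (‖c h‖₊ : ℝ≥0∞) ^ (2:ℝ)
        ≤ (∫⁻ x, (‖Dη (h, x)‖₊ : ℝ≥0∞) ∂μ) ^ (2:ℝ) := ENNReal.rpow_le_rpow h1 (by norm_num)
      _ ≤ ∫⁻ x, (‖Dη (h, x)‖₊ : ℝ≥0∞) ^ (2:ℝ) ∂μ :=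
          aux_sq_lintegral_le μ _
            ((hDη_meas.comp measurable_prodMk_left).nnnorm.coe_nnreal_ennreal.aemeasurable)
  have hc_L2 : eLpNorm (fun p : G × X => c p.1) 2 (nuGX G μ) ≤ eLpNorm Dη 2 (nuGX G μ) := by
    rw [aux_elp2, aux_elp2, hνdef]
    refine ENNReal.rpow_le_rpow ?_ (by norm_num)
    rw [aux_lintegral_nu μ _ (hcfst_meas.nnnorm.coe_nnreal_ennreal.pow_const _),
      aux_lintegral_nu μ _ (hDη_meas.nnnorm.coe_nnreal_ennreal.pow_const _)]
    refine ENNReal.tsum_le_tsum fun h => ?_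
    calc ∫⁻ _x, (‖c h‖₊ : ℝ≥0∞) ^ (2:ℝ) ∂μ
        = (‖c h‖₊ : ℝ≥0∞) ^ (2:ℝ) := by rw [lintegral_const, measure_univ, mul_one]
      _ ≤ ∫⁻ x, (‖Dη (h, x)‖₊ : ℝ≥0∞) ^ (2:ℝ) ∂μ := hc_sq h
  have hD_split : eLpNorm (fun p : G × X => η₀ (g⁻¹ * p.1 * g, g⁻¹ • p.2) - η₀ p) 2 (nuGX G μ)
      ≤ 2 * eLpNorm Dη 2 (nuGX G μ) := by
    have hfun : (fun p : G × X => η₀ (g⁻¹ * p.1 * g, g⁻¹ • p.2) - η₀ p)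
        = fun p : G × X => Dη p - c p.1 := by
      funext p; simp only [hη₀, hDη, hc]; ring
    rw [hfun, two_mul]
    calc eLpNorm (fun p : G × X => Dη p - c p.1) 2 (nuGX G μ)
        ≤ eLpNorm Dη 2 (nuGX G μ) + eLpNorm (fun p : G × X => c p.1) 2 (nuGX G μ) :=
          eLpNorm_sub_le hDη_meas.aestronglyMeasurable hcfst_meas.aestronglyMeasurable one_le_two
      _ ≤ eLpNorm Dη 2 (nuGX G μ) + eLpNorm Dη 2 (nuGX G μ) := add_le_add_right hc_L2 _
  -- from the L¹ hypothesis to an L² bound on Dη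
  have hmemS : g⁻¹ ∈ S₀ ∪ S₀.image (·⁻¹) :=
    Finset.mem_union_right _ (Finset.mem_image_of_mem _ hgS₀)
  have hδ1 := hS g⁻¹ hmemS
  simp only [inv_inv] at hδ1
  rw [aux_elp1] at hδ1
  have hDη2_le : ∫⁻ p, (‖Dη p‖₊ : ℝ≥0∞) ^ (2:ℝ) ∂((Measure.count : Measure G).prod μ) ≤
      ENNReal.ofReal ((κ * ε / 16)^2) := by
    have hδ1' : ∫⁻ p : G × X, (‖ξ (g⁻¹ * p.1 * g, g⁻¹ • p.2) - ξ p‖₊ : ℝ≥0∞)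
        ∂((Measure.count : Measure G).prod μ) ≤ ENNReal.ofReal ((κ * ε / 16)^2) := by
      rw [← hνdef]; exact hδ1.le
    refine le_trans (lintegral_mono fun p => ?_) hδ1'
    show (‖Dη p‖₊ : ℝ≥0∞) ^ (2:ℝ) ≤ (‖ξ (g⁻¹ * p.1 * g, g⁻¹ • p.2) - ξ p‖₊ : ℝ≥0∞)
    rw [aux_nnnorm_eq_ofReal_abs, aux_nnnorm_eq_ofReal_abs,
      ENNReal.ofReal_rpow_of_nonneg (abs_nonneg _) (by norm_num)]
    refine ENNReal.ofReal_le_ofReal ?_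
    rw [show ((2:ℝ)) = ((2:ℕ):ℝ) by norm_num, Real.rpow_natCast, sq_abs]
    exact aux_sqrt_sq_le_abs (hpos _) (hpos _)
  have hpos16 : (0:ℝ) < κ * ε / 16 := by positivity
  have hDη_L2 : eLpNorm Dη 2 (nuGX G μ) ≤ ENNReal.ofReal (κ * ε / 16) := by
    rw [aux_elp2, hνdef]
    calc (∫⁻ p, (‖Dη p‖₊ : ℝ≥0∞) ^ (2:ℝ) ∂((Measure.count : Measure G).prod μ)) ^ (1/2:ℝ)
        ≤ (ENNReal.ofReal ((κ * ε / 16)^2)) ^ (1/2:ℝ) :=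
          ENNReal.rpow_le_rpow hDη2_le (by norm_num)
      _ = ENNReal.ofReal (κ * ε / 16) := by
          rw [ENNReal.ofReal_rpow_of_nonneg (sq_nonneg _) (by norm_num)]
          congr 1
          rw [← Real.rpow_natCast (κ * ε / 16) 2, ← Real.rpow_mul hpos16.le]
          norm_num
  -- conclude the L² bound on η₀
  have hη₀_L2 : eLpNorm η₀ 2 (nuGX G μ) ≤ ENNReal.ofReal (ε / 8) := by
    have hchain : ENNReal.ofReal κ * eLpNorm η₀ 2 (nuGX G μ) ≤
        ENNReal.ofReal κ * ENNReal.ofReal (ε / 8) := by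
      calc ENNReal.ofReal κ * eLpNorm η₀ 2 (nuGX G μ)
          ≤ eLpNorm (fun p : G × X => η₀ (g⁻¹ * p.1 * g, g⁻¹ • p.2) - η₀ p) 2 (nuGX G μ) := hineq
        _ ≤ 2 * eLpNorm Dη 2 (nuGX G μ) := hD_split
        _ ≤ 2 * ENNReal.ofReal (κ * ε / 16) := by
            exact mul_le_mul_right hDη_L2 2
        _ = ENNReal.ofReal κ * ENNReal.ofReal (ε / 8) := by
            rw [show (2:ℝ≥0∞) = ENNReal.ofReal 2 by norm_num,
              ← ENNReal.ofReal_mul (by norm_num), ← ENNReal.ofReal_mul hκ.le]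
            congr 1; ring
    exact (ENNReal.mul_le_mul_iff_right (by simp [ENNReal.ofReal_pos.mpr hκ, ne_of_gt])
      ENNReal.ofReal_ne_top).mp hchain
  -- final estimate
  set b : G → ℝ := fun h => ∫ t, ξ (h, t) ∂μ with hb
  set q : G → ℝ := fun h => (a h)^2 with hq
  have hbfst_meas : Measurable (fun p : G × X => b p.1) :=
    (measurable_of_countable b).comp measurable_fst
  have hqfst_meas : Measurable (fun p : G × X => q p.1) :=
    (measurable_of_countable q).comp measurable_fst
  have hgoal_eq : (fun p : G × X => ξ p - ∫ t, ξ (p.1, t) ∂μ) = fun p : G × X => ξ p - b p.1 :=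
    rfl
  rw [hgoal_eq, aux_elp1, hνdef]
  -- pointwise product formula
  have hpt : ∀ p : G × X, (‖ξ p - q p.1‖₊ : ℝ≥0∞) =
      (‖η₀ p‖₊ : ℝ≥0∞) * (‖η p + a p.1‖₊ : ℝ≥0∞) := by
    intro p
    have hfac : ξ p - q p.1 = η₀ p * (η p + a p.1) := by
      have hsq : η p ^ 2 = ξ p := Real.sq_sqrt (hpos p)
      simp only [hη₀, hq]
      nlinarith [hsq]
    rw [hfac, ← ENNReal.coe_mul, nnnorm_mul]
  -- Cauchy–Schwarz for the product part
  have hCS : ∫⁻ p, (‖ξ p - q p.1‖₊ : ℝ≥0∞) ∂((Measure.count : Measure G).prod μ) ≤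
      ENNReal.ofReal (ε / 8) * 2 := by
    have hsum_L2 : eLpNorm (fun p : G × X => η p + a p.1) 2 (nuGX G μ) ≤ 2 := by
      calc eLpNorm (fun p : G × X => η p + a p.1) 2 (nuGX G μ)
          ≤ eLpNorm η 2 (nuGX G μ) + eLpNorm (fun p : G × X => a p.1) 2 (nuGX G μ) :=
            eLpNorm_add_le hη_meas.aestronglyMeasurable hafst_meas.aestronglyMeasurable one_le_two
        _ ≤ 1 + 1 := add_le_add hη_L2 ha_L2
        _ = 2 := by norm_num
    have hhold := ENNReal.lintegral_mul_le_Lp_mul_Lq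
      ((Measure.count : Measure G).prod μ) aux_conj22
      (hη₀_meas.nnnorm.coe_nnreal_ennreal.aemeasurable)
      ((hη_meas.add hafst_meas).nnnorm.coe_nnreal_ennreal.aemeasurable)
    simp only [Pi.mul_apply] at hhold
    calc ∫⁻ p, (‖ξ p - q p.1‖₊ : ℝ≥0∞) ∂((Measure.count : Measure G).prod μ)
        = ∫⁻ p, (‖η₀ p‖₊ : ℝ≥0∞) * (‖η p + a p.1‖₊ : ℝ≥0∞)
            ∂((Measure.count : Measure G).prod μ) := by simp_rw [hpt]
      _ ≤ (∫⁻ p, (‖η₀ p‖₊ : ℝ≥0∞) ^ (2:ℝ) ∂((Measure.count : Measure G).prod μ)) ^ (1/(2:ℝ)) *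
          (∫⁻ p, (‖η p + a p.1‖₊ : ℝ≥0∞) ^ (2:ℝ)
            ∂((Measure.count : Measure G).prod μ)) ^ (1/(2:ℝ)) := hhold
      _ = eLpNorm η₀ 2 (nuGX G μ) * eLpNorm (fun p : G × X => η p + a p.1) 2 (nuGX G μ) := by
          rw [aux_elp2, aux_elp2, hνdef]
      _ ≤ ENNReal.ofReal (ε / 8) * 2 := mul_le_mul' hη₀_L2 hsum_L2
  -- the averaged part
  have havg : ∫⁻ p, (‖q p.1 - b p.1‖₊ : ℝ≥0∞) ∂((Measure.count : Measure G).prod μ) ≤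
      ∫⁻ p, (‖ξ p - q p.1‖₊ : ℝ≥0∞) ∂((Measure.count : Measure G).prod μ) := by
    rw [aux_lintegral_nu μ (fun p => (‖q p.1 - b p.1‖₊ : ℝ≥0∞)) ((hqfst_meas.sub hbfst_meas).nnnorm.coe_nnreal_ennreal),
      aux_lintegral_nu μ (fun p => (‖ξ p - q p.1‖₊ : ℝ≥0∞)) ((hmeas.sub hqfst_meas).nnnorm.coe_nnreal_ennreal)]
    refine ENNReal.tsum_le_tsum fun h => ?_
    have hint : Integrable (fun t => q h - ξ (h, t)) μ := (integrable_const _).sub (hξ_int h)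
    have hqb : q h - b h = ∫ t, (q h - ξ (h, t)) ∂μ := by
      rw [integral_sub (integrable_const _) (hξ_int h), integral_const, probReal_univ]
      simp [hb]
    calc ∫⁻ _x, (‖q h - b h‖₊ : ℝ≥0∞) ∂μ
        = (‖q h - b h‖₊ : ℝ≥0∞) := by rw [lintegral_const, measure_univ, mul_one]
      _ ≤ ∫⁻ t, (‖q h - ξ (h, t)‖₊ : ℝ≥0∞) ∂μ := by
          rw [aux_nnnorm_eq_ofReal_abs, hqb]
          exact aux_ofReal_abs_integral_le μ _ hint
      _ = ∫⁻ t, (‖ξ (h, t) - q h‖₊ : ℝ≥0∞) ∂μ := by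
          simp_rw [aux_nnnorm_eq_ofReal_abs, abs_sub_comm]
  -- assemble
  have htri : ∫⁻ p, (‖ξ p - b p.1‖₊ : ℝ≥0∞) ∂((Measure.count : Measure G).prod μ) ≤
      (∫⁻ p, (‖ξ p - q p.1‖₊ : ℝ≥0∞) ∂((Measure.count : Measure G).prod μ)) +
      ∫⁻ p, (‖q p.1 - b p.1‖₊ : ℝ≥0∞) ∂((Measure.count : Measure G).prod μ) := by
    rw [← lintegral_add_left (f := fun p => (‖ξ p - q p.1‖₊ : ℝ≥0∞)) ((hmeas.sub hqfst_meas).nnnorm.coe_nnreal_ennreal)]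
    refine lintegral_mono fun p => ?_
    calc (‖ξ p - b p.1‖₊ : ℝ≥0∞)
        = (‖(ξ p - q p.1) + (q p.1 - b p.1)‖₊ : ℝ≥0∞) := by ring_nf
      _ ≤ (‖ξ p - q p.1‖₊ : ℝ≥0∞) + (‖q p.1 - b p.1‖₊ : ℝ≥0∞) := by
          rw [← ENNReal.coe_add]
          exact ENNReal.coe_le_coe.2 (nnnorm_add_le _ _)
  calc ∫⁻ p, (‖ξ p - b p.1‖₊ : ℝ≥0∞) ∂((Measure.count : Measure G).prod μ)
      ≤ (∫⁻ p, (‖ξ p - q p.1‖₊ : ℝ≥0∞) ∂((Measure.count : Measure G).prod μ)) +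
        ∫⁻ p, (‖q p.1 - b p.1‖₊ : ℝ≥0∞) ∂((Measure.count : Measure G).prod μ) := htri
    _ ≤ (ENNReal.ofReal (ε / 8) * 2) + (ENNReal.ofReal (ε / 8) * 2) :=
        add_le_add hCS (le_trans havg hCS)
    _ = ENNReal.ofReal (ε / 2) := by
        rw [show (2:ℝ≥0∞) = ENNReal.ofReal 2 by norm_num,
          ← ENNReal.ofReal_mul (by linarith), ← ENNReal.ofReal_add (by linarith) (by linarith)]
        congr 1; ring
    _ < ENNReal.ofReal ε := (ENNReal.ofReal_lt_ofReal_iff hε).2 (by linarith)
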